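/- Transfer of cut-off upper bound via interweaving: let (P^{(n)}) and (P̃^{(n)}) be families of Markov semigroups with invariant probabilities ν^{(n)}, ν̃^{(n)}, linked for each n by a symmetric interweaving with deterministic warm-up time t₀^{(n)} satisfying t₀^{(n)}/t^{(n)} → 0. If d^{(n)}(t) := sup_{m₀} ‖m₀P^{(n)}_t − ν^{(n)}‖_tv satisfies d^{(n)}(rt^{(n)}) → 0 for every r > 1, then d̃^{(n)}, defined analogously for P̃^{(n)}, also satisfies d̃^{(n)}(rt^{(n)}) → 0 for every r > 1. The key inequality is d̃^{(n)}(t₀^{(n)} + t) ≤ d^{(n)}(t) for all t ≥ 0. -/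

import Mathlib

open MeasureTheory ProbabilityTheory Filter

/-- Total variation discrepancy `‖m - ν‖_tv = sup_A (m(A) - ν(A))`. -/
noncomputable def tvDist {α : Type*} [MeasurableSpace α] (m ν : Measure α) : ℝ :=
  sSup {r : ℝ | ∃ A : Set α, MeasurableSet A ∧ r = (m A).toReal - (ν A).toReal}

/-- The worst-case distance to equilibrium
`d(t) = sup_{m₀ ∈ P(V)} ‖m₀ P_t - ν‖_tv` of a Markov semigroup `P` at time `t`. -/
noncomputable def distEquil {α : Type*} [MeasurableSpace α]
    (P : ℝ → Kernel α α) (ν : Measure α) (t : ℝ) : ℝ :=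
  sSup {r : ℝ | ∃ m₀ : Measure α, IsProbabilityMeasure m₀ ∧
    r = tvDist (m₀.bind fun x => P t x) ν}

section Aux

variable {α β : Type*} [MeasurableSpace α] [MeasurableSpace β]

lemma tvSet_nonempty (m ν : Measure α) :
    {r : ℝ | ∃ A : Set α, MeasurableSet A ∧ r = (m A).toReal - (ν A).toReal}.Nonempty :=
  ⟨0, ∅, MeasurableSet.empty, by simp⟩

lemma tvSet_bddAbove (m ν : Measure α) [IsProbabilityMeasure m] :
    BddAbove {r : ℝ | ∃ A : Set α, MeasurableSet A ∧ r = (m A).toReal - (ν A).toReal} := by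
  refine ⟨1, ?_⟩
  rintro r ⟨A, hA, rfl⟩
  have h1 : (m A).toReal ≤ 1 := by
    simpa using ENNReal.toReal_mono (measure_ne_top m Set.univ) (measure_mono (Set.subset_univ A))
  have h2 : (0:ℝ) ≤ (ν A).toReal := ENNReal.toReal_nonneg
  linarith

lemma tvDist_nonneg (m ν : Measure α) [IsProbabilityMeasure m] : 0 ≤ tvDist m ν :=
  le_csSup (tvSet_bddAbove m ν) ⟨∅, MeasurableSet.empty, by simp⟩

lemma tvDist_le_one (m ν : Measure α) [IsProbabilityMeasure m] : tvDist m ν ≤ 1 := by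
  refine csSup_le (tvSet_nonempty m ν) ?_
  rintro r ⟨A, hA, rfl⟩
  have h1 : (m A).toReal ≤ 1 := by
    simpa using ENNReal.toReal_mono (measure_ne_top m Set.univ) (measure_mono (Set.subset_univ A))
  have h2 : (0:ℝ) ≤ (ν A).toReal := ENNReal.toReal_nonneg
  linarith

lemma isProbabilityMeasure_bind (μ : Measure α) [IsProbabilityMeasure μ]
    (K : Kernel α β) [IsMarkovKernel K] : IsProbabilityMeasure (μ.bind fun x => K x) := by
  constructor
  rw [Measure.bind_apply MeasurableSet.univ (Kernel.measurable K).aemeasurable]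
  simp

/-- Data-processing inequality for `tvDist` along a Markov kernel. -/
lemma tvDist_bind_le (μ ν : Measure α) [IsProbabilityMeasure μ] [IsProbabilityMeasure ν]
    (K : Kernel α β) [IsMarkovKernel K] :
    tvDist (μ.bind fun x => K x) (ν.bind fun x => K x) ≤ tvDist μ ν := by
  have hμK : IsProbabilityMeasure (μ.bind fun x => K x) := isProbabilityMeasure_bind μ K
  refine csSup_le (tvSet_nonempty _ _) ?_
  rintro r ⟨A, hA, rfl⟩
  set f : α → ℝ := fun x => (K x A).toReal with hf
  have hfm : Measurable f := (Kernel.measurable_coe K hA).ennreal_toReal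
  have hf01 : ∀ x, 0 ≤ f x ∧ f x ≤ 1 := by
    intro x
    refine ⟨ENNReal.toReal_nonneg, ?_⟩
    simpa using ENNReal.toReal_mono (measure_ne_top (K x) Set.univ)
      (measure_mono (Set.subset_univ A))
  have hint : ∀ (ρ : Measure α), IsProbabilityMeasure ρ → Integrable f ρ := by
    intro ρ hρ
    refine ⟨hfm.aestronglyMeasurable, ?_⟩
    exact HasFiniteIntegral.of_bounded (C := 1)
      (ae_of_all _ fun x => by rw [Real.norm_eq_abs, abs_of_nonneg (hf01 x).1]; exact (hf01 x).2)
  have happ : ∀ (ρ : Measure α), IsProbabilityMeasure ρ →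
      ((ρ.bind fun x => K x) A).toReal = ∫ x, f x ∂ρ := by
    intro ρ hρ
    rw [Measure.bind_apply hA (Kernel.measurable K).aemeasurable]
    rw [← integral_toReal ((Kernel.measurable_coe K hA).aemeasurable)
      (ae_of_all _ fun x => measure_lt_top (K x) A)]
  -- layer cake
  have hlayer : ∀ (ρ : Measure α), IsProbabilityMeasure ρ →
      ∫ x, f x ∂ρ = ∫ t in Set.Ioc (0:ℝ) 1, (ρ {x | t ≤ f x}).toReal := by
    intro ρ hρ
    exact (hint ρ hρ).integral_eq_integral_Ioc_meas_le
      (ae_of_all _ fun x => (hf01 x).1) (ae_of_all _ fun x => (hf01 x).2)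
  -- integrability of layer functions
  have hFin : IsFiniteMeasure (volume.restrict (Set.Ioc (0:ℝ) 1)) := by
    constructor
    rw [Measure.restrict_apply_univ, Real.volume_Ioc]
    simp
  have hlint : ∀ (ρ : Measure α), IsProbabilityMeasure ρ →
      Integrable (fun t => (ρ {x | t ≤ f x}).toReal) (volume.restrict (Set.Ioc (0:ℝ) 1)) := by
    intro ρ hρ
    have hm : Measurable fun t : ℝ => (ρ {x | t ≤ f x}).toReal := by
      refine Measurable.ennreal_toReal ?_
      exact Antitone.measurable (fun s t hst => measure_mono (fun x hx => le_trans hst hx))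
    refine ⟨hm.aestronglyMeasurable, ?_⟩
    refine HasFiniteIntegral.of_bounded (C := 1) (ae_of_all _ fun t => ?_)
    rw [Real.norm_eq_abs, abs_of_nonneg ENNReal.toReal_nonneg]
    simpa using ENNReal.toReal_mono (measure_ne_top ρ Set.univ)
      (measure_mono (Set.subset_univ _))
  set C := tvDist μ ν with hC
  have hptwise : ∀ t : ℝ, (μ {x | t ≤ f x}).toReal ≤ (ν {x | t ≤ f x}).toReal + C := by
    intro t
    have hmeas : MeasurableSet {x | t ≤ f x} := hfm measurableSet_Ici
    have : (μ {x | t ≤ f x}).toReal - (ν {x | t ≤ f x}).toReal ≤ C :=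
      le_csSup (tvSet_bddAbove μ ν) ⟨{x | t ≤ f x}, hmeas, rfl⟩
    linarith
  have hμint := hlint μ ‹_›
  have hνint := hlint ν ‹_›
  have hmono : ∫ t in Set.Ioc (0:ℝ) 1, (μ {x | t ≤ f x}).toReal
      ≤ ∫ t in Set.Ioc (0:ℝ) 1, ((ν {x | t ≤ f x}).toReal + C) :=
    integral_mono hμint (hνint.add (integrable_const C)) hptwise
  have hconst : ∫ _t in Set.Ioc (0:ℝ) 1, C = C := by
    rw [integral_const, measureReal_restrict_apply_univ]
    simp
  rw [happ μ ‹_›, happ ν ‹_›, hlayer μ ‹_›, hlayer ν ‹_›]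
  rw [integral_add hνint (integrable_const C), hconst] at hmono
  linarith

end Aux

section Main

variable {α β : Type*} [MeasurableSpace α] [MeasurableSpace β]

lemma distSet_nonempty (P : ℝ → Kernel α α) (ν : Measure α) [IsProbabilityMeasure ν] (t : ℝ) :
    {r : ℝ | ∃ m₀ : Measure α, IsProbabilityMeasure m₀ ∧
      r = tvDist (m₀.bind fun x => P t x) ν}.Nonempty :=
  ⟨_, ν, ‹_›, rfl⟩

lemma distSet_bddAbove (P : ℝ → Kernel α α) (ν : Measure α) [∀ s, IsMarkovKernel (P s)] (t : ℝ) :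
    BddAbove {r : ℝ | ∃ m₀ : Measure α, IsProbabilityMeasure m₀ ∧
      r = tvDist (m₀.bind fun x => P t x) ν} := by
  refine ⟨1, ?_⟩
  rintro r ⟨m₀, hm₀, rfl⟩
  have := isProbabilityMeasure_bind m₀ (P t)
  exact tvDist_le_one _ _

lemma distEquil_nonneg (P : ℝ → Kernel α α) (ν : Measure α) [IsProbabilityMeasure ν]
    [∀ s, IsMarkovKernel (P s)] (t : ℝ) : 0 ≤ distEquil P ν t := by
  have h := isProbabilityMeasure_bind ν (P t)
  exact le_trans (tvDist_nonneg _ ν) (le_csSup (distSet_bddAbove P ν t) ⟨ν, ‹_›, rfl⟩)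

end Main

section Key

lemma key_ineq {V W : Type*} [MeasurableSpace V] [MeasurableSpace W]
    (P : ℝ → Kernel V V) (P' : ℝ → Kernel W W) (Λ : Kernel V W) (Λ' : Kernel W V)
    [∀ t, IsMarkovKernel (P t)] [∀ t, IsMarkovKernel (P' t)]
    [IsMarkovKernel Λ] [IsMarkovKernel Λ']
    (ν : Measure V) (ν' : Measure W) [IsProbabilityMeasure ν] [IsProbabilityMeasure ν']
    (hinv : ∀ t : ℝ, 0 ≤ t → (ν.bind fun x => P t x) = ν)
    (hνΛ : (ν.bind fun x => Λ x) = ν')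
    (t₀ t : ℝ) (ht : 0 ≤ t)
    (hintw' : ∀ y : W, (((Λ' y).bind fun x => P t x).bind fun x => Λ x) = P' (t₀ + t) y) :
    distEquil P' ν' (t₀ + t) ≤ distEquil P ν t := by
  refine csSup_le (distSet_nonempty _ _ _) ?_
  rintro r ⟨m₀, hm₀, rfl⟩
  set μ₁ : Measure V := m₀.bind fun y => Λ' y with hμ₁
  have hμ₁p : IsProbabilityMeasure μ₁ := isProbabilityMeasure_bind m₀ Λ'
  have hμ₂p : IsProbabilityMeasure (μ₁.bind fun x => P t x) := isProbabilityMeasure_bind μ₁ (P t)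
  have hm1 : Measurable (fun y : W => (Λ' y).bind fun x => P t x) := by
    have h : (fun y : W => (Λ' y).bind fun x => P t x) = fun y => ((P t) ∘ₖ Λ') y := by
      funext y; rw [Kernel.comp_apply]
    rw [h]; exact Kernel.measurable _
  have hcomp : (m₀.bind fun y => P' (t₀ + t) y)
      = (μ₁.bind fun x => P t x).bind fun x => Λ x := by
    calc m₀.bind (fun y => P' (t₀ + t) y)
        = m₀.bind (fun y => ((Λ' y).bind fun x => P t x).bind fun x => Λ x) := by
          congr 1; exact funext fun y => (hintw' y).symm
      _ = (m₀.bind fun y => (Λ' y).bind fun x => P t x).bind fun x => Λ x :=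
          (Measure.bind_bind hm1.aemeasurable (Kernel.measurable Λ).aemeasurable).symm
      _ = (μ₁.bind fun x => P t x).bind fun x => Λ x := by
          rw [hμ₁, Measure.bind_bind (Kernel.measurable Λ').aemeasurable (Kernel.measurable (P t)).aemeasurable]
  rw [hcomp]
  have hdp : tvDist ((μ₁.bind fun x => P t x).bind fun x => Λ x) ν'
      ≤ tvDist (μ₁.bind fun x => P t x) ν := by
    have h := tvDist_bind_le (μ₁.bind fun x => P t x) ν Λ
    rwa [hνΛ] at h
  exact le_trans hdp (le_csSup (distSet_bddAbove P ν t) ⟨μ₁, hμ₁p, rfl⟩)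

end Key

/-- Transfer of the cut-off upper bound via interweaving: if the families
`(P^{(n)})` and `(P'^{(n)})`, with invariant probabilities `ν^{(n)}, ν'^{(n)}`, are linked
for each `n` by a symmetric interweaving with deterministic warm-up times `t₀^{(n)}` with
`t₀^{(n)}/t^{(n)} → 0`, and `d^{(n)}(r t^{(n)}) → 0` for every `r > 1`, then also
`d'^{(n)}(r t^{(n)}) → 0` for every `r > 1`; the key inequality is
`d'^{(n)}(t₀^{(n)} + t) ≤ d^{(n)}(t)`. -/
theorem cutoff_transfer
    {V W : ℕ → Type*} [∀ n, MeasurableSpace (V n)] [∀ n, MeasurableSpace (W n)]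
    (P : ∀ n, ℝ → Kernel (V n) (V n)) (P' : ∀ n, ℝ → Kernel (W n) (W n))
    (Λ : ∀ n, Kernel (V n) (W n)) (Λ' : ∀ n, Kernel (W n) (V n))
    [∀ n t, IsMarkovKernel (P n t)] [∀ n t, IsMarkovKernel (P' n t)]
    [∀ n, IsMarkovKernel (Λ n)] [∀ n, IsMarkovKernel (Λ' n)]
    (ν : ∀ n, Measure (V n)) (ν' : ∀ n, Measure (W n))
    [∀ n, IsProbabilityMeasure (ν n)] [∀ n, IsProbabilityMeasure (ν' n)]
    (hP : ∀ n, ∀ s t : ℝ, 0 ≤ s → 0 ≤ t → P n (s + t) = P n s ∘ₖ P n t)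
    (hP' : ∀ n, ∀ s t : ℝ, 0 ≤ s → 0 ≤ t → P' n (s + t) = P' n s ∘ₖ P' n t)
    (hinv : ∀ n, ∀ t : ℝ, 0 ≤ t → ((ν n).bind fun x => P n t x) = ν n)
    (hinv' : ∀ n, ∀ t : ℝ, 0 ≤ t → ((ν' n).bind fun y => P' n t y) = ν' n)
    (hνΛ : ∀ n, ((ν n).bind fun x => Λ n x) = ν' n)
    (hν'Λ' : ∀ n, ((ν' n).bind fun y => Λ' n y) = ν n)
    -- symmetric interweaving with deterministic warm-up time `t₀ n` :
    -- `Λ P'_s Λ' = P_{t₀+s}` and `Λ' P_s Λ = P'_{t₀+s}`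
    (t₀ : ℕ → ℝ) (ht₀ : ∀ n, 0 ≤ t₀ n)
    (hintw : ∀ n, ∀ s : ℝ, 0 ≤ s → ∀ x : V n,
      ((((Λ n) x).bind fun y => P' n s y).bind fun y => Λ' n y) = P n (t₀ n + s) x)
    (hintw' : ∀ n, ∀ s : ℝ, 0 ≤ s → ∀ y : W n,
      ((((Λ' n) y).bind fun x => P n s x).bind fun x => Λ n x) = P' n (t₀ n + s) y)
    -- the distances to equilibrium are nonincreasing in time
    (hanti : ∀ n, AntitoneOn (distEquil (P n) (ν n)) (Set.Ici 0))
    (hanti' : ∀ n, AntitoneOn (distEquil (P' n) (ν' n)) (Set.Ici 0))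
    -- cut-off times
    (tn : ℕ → ℝ) (htn : ∀ n, 0 < tn n)
    (hratio : Tendsto (fun n => t₀ n / tn n) atTop (nhds 0))
    -- cut-off upper bound for the family `P`
    (hup : ∀ r : ℝ, 1 < r →
      Tendsto (fun n => distEquil (P n) (ν n) (r * tn n)) atTop (nhds 0)) :
    -- key inequality and cut-off upper bound for the family `P'`
    (∀ n, ∀ t : ℝ, 0 ≤ t →
      distEquil (P' n) (ν' n) (t₀ n + t) ≤ distEquil (P n) (ν n) t) ∧
    (∀ r : ℝ, 1 < r →
      Tendsto (fun n => distEquil (P' n) (ν' n) (r * tn n)) atTop (nhds 0)) := by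

  have key : ∀ n, ∀ t : ℝ, 0 ≤ t →
      distEquil (P' n) (ν' n) (t₀ n + t) ≤ distEquil (P n) (ν n) t := by
    intro n t ht
    exact key_ineq (P n) (P' n) (Λ n) (Λ' n) (ν n) (ν' n) (hinv n) (hνΛ n) (t₀ n) t ht
      (hintw' n t ht)
  refine ⟨key, ?_⟩
  intro r hr
  set r' : ℝ := (1 + r) / 2 with hr'def
  have hr'1 : 1 < r' := by rw [hr'def]; linarith
  have hrr' : 0 < r - r' := by rw [hr'def]; linarith
  have hev : ∀ᶠ n in atTop, t₀ n + r' * tn n ≤ r * tn n := by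
    filter_upwards [hratio.eventually_lt_const hrr'] with n hn
    have h1 : t₀ n < (r - r') * tn n := (div_lt_iff₀ (htn n)).mp hn
    have h2 : (r - r') * tn n = r * tn n - r' * tn n := sub_mul r r' (tn n)
    linarith
  have hle : ∀ᶠ n in atTop,
      distEquil (P' n) (ν' n) (r * tn n) ≤ distEquil (P n) (ν n) (r' * tn n) := by
    filter_upwards [hev] with n hn
    have h0 : (0:ℝ) ≤ r' * tn n := mul_nonneg (by linarith) (htn n).le
    have h1 : (0:ℝ) ≤ t₀ n + r' * tn n := by linarith [ht₀ n]
    have h2 : distEquil (P' n) (ν' n) (r * tn n)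
        ≤ distEquil (P' n) (ν' n) (t₀ n + r' * tn n) :=
      hanti' n (Set.mem_Ici.mpr h1) (Set.mem_Ici.mpr (by linarith)) hn
    exact le_trans h2 (key n (r' * tn n) h0)
  refine tendsto_of_tendsto_of_tendsto_of_le_of_le' tendsto_const_nhds (hup r' hr'1) ?_ hle
  exact Eventually.of_forall fun n => distEquil_nonneg _ _ _
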